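/- (Lemma 4 of the paper, claim (19).) For all integers s ≥ 1 and u with 0 ≤ u < pow_s, every coefficient of the high part χ(s,u+1)_H := Σ_{i > ts+(u+1)(k−1)} coeff(χ(s,u+1), X^i)·X^i belongs to the subspace I_{s+1}; equivalently, for every degree i > ts + (u+1)(k−1), the coefficient of X^i in χ(s,u+1) lies in I_{s+1}. -/

import Mathlib

open Polynomial

noncomputable def Lam (F : Type*) [CommRing F] (t k : ℕ) :
    Polynomial (MvPolynomial (Fin t ⊕ Fin k) F) :=
  X ^ t + ∑ j : Fin t, C (MvPolynomial.X (Sum.inl j)) * X ^ (j : ℕ)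

noncomputable def Pp (F : Type*) [CommRing F] (t k : ℕ) :
    Polynomial (MvPolynomial (Fin t ⊕ Fin k) F) :=
  ∑ i : Fin k, C (MvPolynomial.X (Sum.inr i)) * X ^ (i : ℕ)

noncomputable def liftP (F : Type*) [CommRing F] (t k : ℕ) (f : Polynomial F) :
    Polynomial (MvPolynomial (Fin t ⊕ Fin k) F) :=
  f.map MvPolynomial.C

/-- `Ω`, the negated quotient in the division of `Λ·R` by the monic polynomial `G`. -/
noncomputable def Om (F : Type*) [Field F] (t k : ℕ) (R G : Polynomial F) :
    Polynomial (MvPolynomial (Fin t ⊕ Fin k) F) :=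
  -((Lam F t k * liftP F t k R) /ₘ liftP F t k G)

/-- `χ(s,u) := Λ^{s−u}·(Λ·R + Ω·G)^u` if `u < s`, and
`χ(s,u) := (Σ_{i=0}^{s−1} binom(u,i) Λ^{s−i} R^{u−i} Ω^i G^i) mod G^s` if `u ≥ s`. -/
noncomputable def chi (F : Type*) [Field F] (t k : ℕ) (R G : Polynomial F) (s u : ℕ) :
    Polynomial (MvPolynomial (Fin t ⊕ Fin k) F) :=
  if u < s then
    Lam F t k ^ (s - u) * (Lam F t k * liftP F t k R + Om F t k R G * liftP F t k G) ^ u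
  else
    (∑ i ∈ Finset.range s, u.choose i •
      (Lam F t k ^ (s - i) * liftP F t k R ^ (u - i) * Om F t k R G ^ i * liftP F t k G ^ i))
      %ₘ liftP F t k G ^ s

/-- `ID F t k R G D` is the smallest `F`-linear subspace of
`A = F[λ₀,…,λ_{t−1},p₀,…,p_{k−1}]` containing all coefficients of
`Λ·P − (Λ·R mod G)` and closed under multiplication by any monomial `m`
whenever the total degree of the product is at most `D`. -/
noncomputable def ID (F : Type*) [Field F] (t k : ℕ) (R G : Polynomial F) (D : ℕ) :
    Submodule F (MvPolynomial (Fin t ⊕ Fin k) F) :=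
  sInf {W : Submodule F (MvPolynomial (Fin t ⊕ Fin k) F) |
    (Set.range (Lam F t k * Pp F t k - (Lam F t k * liftP F t k R) %ₘ liftP F t k G).coeff) ⊆ W ∧
    ∀ f ∈ W, ∀ d : (Fin t ⊕ Fin k) →₀ ℕ,
      ((MvPolynomial.monomial d (1 : F)) * f).totalDegree ≤ D →
      (MvPolynomial.monomial d (1 : F)) * f ∈ W}

namespace Stmt13Aux


variable {F : Type*} [Field F] {σ : Type*}

/-- polynomials of total degree at most `d` form an `F`-submodule. -/
def degLE (F : Type*) [Field F] (σ : Type*) (d : ℕ) : Submodule F (MvPolynomial σ F) where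
  carrier := {x | x.totalDegree ≤ d}
  add_mem' := fun ha hb => le_trans (MvPolynomial.totalDegree_add _ _) (max_le ha hb)
  zero_mem' := by simp [Set.mem_setOf_eq]
  smul_mem' := fun c x hx => le_trans (MvPolynomial.totalDegree_smul_le c x) hx

lemma mem_degLE {d : ℕ} {x : MvPolynomial σ F} : x ∈ degLE F σ d ↔ x.totalDegree ≤ d := Iff.rfl

lemma degLE_mono {d d' : ℕ} (h : d ≤ d') : degLE F σ d ≤ degLE F σ d' :=
  fun _ hx => le_trans hx h

lemma coeff_mul_mem_degLE {a b : ℕ} {f g : Polynomial (MvPolynomial σ F)}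
    (hf : ∀ i, f.coeff i ∈ degLE F σ a) (hg : ∀ i, g.coeff i ∈ degLE F σ b) :
    ∀ i, (f * g).coeff i ∈ degLE F σ (a + b) := by
  intro i
  rw [Polynomial.coeff_mul]
  refine Submodule.sum_mem _ fun p _ => ?_
  exact mem_degLE.2 <| le_trans (MvPolynomial.totalDegree_mul _ _)
    (add_le_add (hf p.1) (hg p.2))

lemma coeff_pow_mem_degLE {a : ℕ} {f : Polynomial (MvPolynomial σ F)}
    (hf : ∀ i, f.coeff i ∈ degLE F σ a) (m : ℕ) :
    ∀ i, (f ^ m).coeff i ∈ degLE F σ (m * a) := by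
  induction m with
  | zero =>
    intro i
    rw [pow_zero, Polynomial.coeff_one]
    split <;> simp [mem_degLE]
  | succ m ih =>
    intro i
    rw [pow_succ]
    have := coeff_mul_mem_degLE ih hf i
    rwa [show m * a + a = (m+1)*a by ring] at this

lemma sum_modByMonic {ι : Type*} (s : Finset ι) (h : ι → Polynomial (MvPolynomial σ F))
    (g : Polynomial (MvPolynomial σ F)) :
    (∑ j ∈ s, h j) %ₘ g = ∑ j ∈ s, h j %ₘ g :=
  map_sum (Polynomial.modByMonicHom g) h s

lemma monic_mul_divByMonic {g : Polynomial (MvPolynomial σ F)} (hg : g.Monic)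
    (f : Polynomial (MvPolynomial σ F)) : g * (f /ₘ g) = f - f %ₘ g := by
  have h := Polynomial.modByMonic_add_div f g
  rw [eq_sub_iff_add_eq, add_comm]
  exact h

lemma sum_divByMonic {ι : Type*} {g : Polynomial (MvPolynomial σ F)} (hg : g.Monic)
    (s : Finset ι) (h : ι → Polynomial (MvPolynomial σ F)) :
    (∑ j ∈ s, h j) /ₘ g = ∑ j ∈ s, h j /ₘ g := by
  refine mul_left_cancel₀ hg.ne_zero ?_
  rw [monic_mul_divByMonic hg, sum_modByMonic, Finset.mul_sum, ← Finset.sum_sub_distrib]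
  exact Finset.sum_congr rfl fun j _ => (monic_mul_divByMonic hg _).symm

lemma smul_divByMonic' {g : Polynomial (MvPolynomial σ F)} (hg : g.Monic)
    (c : MvPolynomial σ F) (f : Polynomial (MvPolynomial σ F)) :
    (c • f) /ₘ g = c • (f /ₘ g) := by
  refine mul_left_cancel₀ hg.ne_zero ?_
  rw [monic_mul_divByMonic hg, Polynomial.smul_modByMonic, mul_smul_comm,
    monic_mul_divByMonic hg, smul_sub]

lemma coeff_modByMonic_mem {W : Submodule F (MvPolynomial σ F)} {g : Polynomial F}
    (hg : g.Monic) {f : Polynomial (MvPolynomial σ F)} {N : ℕ} (hN : N ≤ g.natDegree)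
    (hf : ∀ j, N ≤ j → f.coeff j ∈ W) :
    ∀ i, N ≤ i → (f %ₘ g.map MvPolynomial.C).coeff i ∈ W := by
  intro i hi
  have hrw : f %ₘ g.map MvPolynomial.C
      = ∑ j ∈ f.support, f.coeff j • ((X ^ j %ₘ g).map (MvPolynomial.C (σ := σ))) := by
    conv_lhs => rw [f.as_sum_support]
    rw [sum_modByMonic]
    refine Finset.sum_congr rfl fun j _ => ?_
    rw [← Polynomial.smul_X_eq_monomial, Polynomial.smul_modByMonic,
      Polynomial.map_modByMonic MvPolynomial.C hg, Polynomial.map_pow, Polynomial.map_X]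
  rw [hrw, Polynomial.finset_sum_coeff]
  refine Submodule.sum_mem _ fun j _ => ?_
  rw [Polynomial.coeff_smul, Polynomial.coeff_map, smul_eq_mul, mul_comm,
    MvPolynomial.C_mul']
  by_cases hjN : N ≤ j
  · exact Submodule.smul_mem _ _ (hf j hjN)
  · have hXj : (X ^ j : Polynomial F) %ₘ g = X ^ j := by
      rw [Polynomial.modByMonic_eq_self_iff hg, Polynomial.degree_X_pow,
        Polynomial.degree_eq_natDegree hg.ne_zero]
      exact_mod_cast lt_of_lt_of_le (by omega : j < N) hN
    rw [hXj, Polynomial.coeff_X_pow, if_neg (by omega), zero_smul]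
    exact W.zero_mem

lemma coeff_divByMonic_mem {W : Submodule F (MvPolynomial σ F)} {g : Polynomial F}
    (hg : g.Monic) {f : Polynomial (MvPolynomial σ F)}
    (hf : ∀ j, f.coeff j ∈ W) :
    ∀ i, (f /ₘ g.map MvPolynomial.C).coeff i ∈ W := by
  intro i
  have hgm : (g.map (MvPolynomial.C (σ := σ))).Monic := hg.map _
  have hrw : f /ₘ g.map MvPolynomial.C
      = ∑ j ∈ f.support, f.coeff j • ((X ^ j /ₘ g).map (MvPolynomial.C (σ := σ))) := by
    conv_lhs => rw [f.as_sum_support]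
    rw [sum_divByMonic hgm]
    refine Finset.sum_congr rfl fun j _ => ?_
    rw [← Polynomial.smul_X_eq_monomial, smul_divByMonic' hgm,
      Polynomial.map_divByMonic MvPolynomial.C hg, Polynomial.map_pow, Polynomial.map_X]
  rw [hrw, Polynomial.finset_sum_coeff]
  refine Submodule.sum_mem _ fun j _ => ?_
  rw [Polynomial.coeff_smul, Polynomial.coeff_map, smul_eq_mul, mul_comm,
    MvPolynomial.C_mul']
  exact Submodule.smul_mem _ _ (hf j)



variable {F : Type*} [Field F] {t k : ℕ} {R G : Polynomial F} {D : ℕ}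

/-- the generator polynomial `E = Λ·P − (Λ·R mod G)` -/
noncomputable def Ep (F : Type*) [Field F] (t k : ℕ) (R G : Polynomial F) :
    Polynomial (MvPolynomial (Fin t ⊕ Fin k) F) :=
  Lam F t k * Pp F t k - (Lam F t k * liftP F t k R) %ₘ liftP F t k G

lemma ID_gen_mem (j : ℕ) : (Ep F t k R G).coeff j ∈ ID F t k R G D := by
  rw [ID, Submodule.mem_sInf]
  intro W hW
  exact hW.1 ⟨j, rfl⟩

lemma ID_closure {f : MvPolynomial (Fin t ⊕ Fin k) F} (hf : f ∈ ID F t k R G D)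
    (d : (Fin t ⊕ Fin k) →₀ ℕ)
    (hd : ((MvPolynomial.monomial d (1 : F)) * f).totalDegree ≤ D) :
    (MvPolynomial.monomial d (1 : F)) * f ∈ ID F t k R G D := by
  rw [ID, Submodule.mem_sInf]
  intro W hW
  have hfW : f ∈ W := by
    rw [ID, Submodule.mem_sInf] at hf
    exact hf W hW
  exact hW.2 f hfW d hd

lemma mul_mem_ID {a b : ℕ} {e x : MvPolynomial (Fin t ⊕ Fin k) F}
    (he : e ∈ ID F t k R G D) (hea : e.totalDegree ≤ a) (hx : x.totalDegree ≤ b)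
    (hab : b + a ≤ D) : x * e ∈ ID F t k R G D := by
  have hsplit : x * e = ∑ v ∈ x.support, (MvPolynomial.monomial v (MvPolynomial.coeff v x)) * e := by
    rw [← Finset.sum_mul, ← x.as_sum]
  rw [hsplit]
  refine Submodule.sum_mem _ fun v hv => ?_
  have hxe : (MvPolynomial.monomial v (MvPolynomial.coeff v x)) * e
      = MvPolynomial.coeff v x • ((MvPolynomial.monomial v (1:F)) * e) := by
    rw [← smul_mul_assoc, MvPolynomial.smul_monomial, smul_eq_mul, mul_one]
  rw [hxe]
  refine Submodule.smul_mem _ _ (ID_closure he v ?_)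
  calc ((MvPolynomial.monomial v (1:F)) * e).totalDegree
      ≤ (MvPolynomial.monomial v (1:F)).totalDegree + e.totalDegree :=
        MvPolynomial.totalDegree_mul _ _
    _ ≤ (v.sum fun _ n => n) + a := by
        exact add_le_add (MvPolynomial.totalDegree_monomial_le _ _) hea
    _ ≤ b + a := by
        refine add_le_add_left (le_trans (MvPolynomial.le_totalDegree ?_) hx) a
        simpa using hv
    _ ≤ D := hab

lemma Lam_coeff_degLE : ∀ i, (Lam F t k).coeff i ∈ degLE F (Fin t ⊕ Fin k) 1 := by
  intro i
  rw [Lam, Polynomial.coeff_add, Polynomial.finset_sum_coeff]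
  refine Submodule.add_mem _ ?_ (Submodule.sum_mem _ fun j _ => ?_)
  · rw [Polynomial.coeff_X_pow]
    split <;> simp [mem_degLE]
  · rw [Polynomial.coeff_C_mul, Polynomial.coeff_X_pow]
    split
    · simpa [mem_degLE] using (by simp [MvPolynomial.totalDegree_X] :
        (MvPolynomial.X (Sum.inl j) : MvPolynomial (Fin t ⊕ Fin k) F).totalDegree ≤ 1)
    · simp [mem_degLE]

lemma Pp_coeff_degLE : ∀ i, (Pp F t k).coeff i ∈ degLE F (Fin t ⊕ Fin k) 1 := by
  intro i
  rw [Pp, Polynomial.finset_sum_coeff]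
  refine Submodule.sum_mem _ fun j _ => ?_
  rw [Polynomial.coeff_C_mul, Polynomial.coeff_X_pow]
  split
  · simpa [mem_degLE] using (by simp [MvPolynomial.totalDegree_X] :
      (MvPolynomial.X (Sum.inr j) : MvPolynomial (Fin t ⊕ Fin k) F).totalDegree ≤ 1)
  · simp [mem_degLE]

lemma Pp_coeff_eq_zero {x : ℕ} (hx : k ≤ x) : (Pp F t k).coeff x = 0 := by
  rw [Pp, Polynomial.finset_sum_coeff]
  refine Finset.sum_eq_zero fun j _ => ?_
  rw [Polynomial.coeff_C_mul, Polynomial.coeff_X_pow, if_neg (by omega : ¬ x = (j:ℕ)), mul_zero]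

lemma liftP_coeff_degLE (f : Polynomial F) :
    ∀ i, (liftP F t k f).coeff i ∈ degLE F (Fin t ⊕ Fin k) 0 := by
  intro i
  rw [liftP, Polynomial.coeff_map]
  simp [mem_degLE]

lemma natDegree_Lam_le : (Lam F t k).natDegree ≤ t := by
  rw [Lam]
  refine le_trans (Polynomial.natDegree_add_le _ _) (max_le (by simp) ?_)
  refine le_trans (Polynomial.natDegree_sum_le _ _) ?_
  rw [Finset.fold_max_le]
  refine ⟨Nat.zero_le t, fun j _ => ?_⟩
  exact le_trans (Polynomial.natDegree_C_mul_le _ _) (by simpa using j.2.le)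

lemma Om_coeff_degLE (hGm : G.Monic) :
    ∀ i, (Om F t k R G).coeff i ∈ degLE F (Fin t ⊕ Fin k) 1 := by
  intro i
  rw [Om, Polynomial.coeff_neg]
  refine Submodule.neg_mem _ ?_
  refine coeff_divByMonic_mem hGm (f := Lam F t k * liftP F t k R) (fun j => ?_) i
  have := coeff_mul_mem_degLE (f := Lam F t k) (g := liftP F t k R)
    Lam_coeff_degLE (liftP_coeff_degLE R) j
  simpa using this

lemma Ep_coeff_degLE (hGm : G.Monic) :
    ∀ i, (Ep F t k R G).coeff i ∈ degLE F (Fin t ⊕ Fin k) 2 := by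
  intro i
  rw [Ep, Polynomial.coeff_sub]
  refine Submodule.sub_mem _ ?_ ?_
  · exact coeff_mul_mem_degLE Lam_coeff_degLE Pp_coeff_degLE i
  · refine degLE_mono (by omega : (1:ℕ) ≤ 2) ?_
    refine coeff_modByMonic_mem hGm (N := 0) (Nat.zero_le _) (fun j _ => ?_) i (Nat.zero_le _)
    have := coeff_mul_mem_degLE (f := Lam F t k) (g := liftP F t k R)
      Lam_coeff_degLE (liftP_coeff_degLE R) j
    simpa using this

/-- The polynomial `S_u = Σ_{i<s} C(u,i) Λ^{s−i} R^{u−i} Ω^i G^i`. -/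
noncomputable def Ssum (F : Type*) [Field F] (t k : ℕ) (R G : Polynomial F) (s u : ℕ) :
    Polynomial (MvPolynomial (Fin t ⊕ Fin k) F) :=
  ∑ i ∈ Finset.range s, u.choose i •
    (Lam F t k ^ (s - i) * liftP F t k R ^ (u - i) * Om F t k R G ^ i * liftP F t k G ^ i)

/-- The polynomial `T'_u = Σ_{i<s} C(u,i) Λ^{s−1−i} R^{u−i} Ω^i G^i`. -/
noncomputable def Tsum (F : Type*) [Field F] (t k : ℕ) (R G : Polynomial F) (s u : ℕ) :
    Polynomial (MvPolynomial (Fin t ⊕ Fin k) F) :=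
  ∑ i ∈ Finset.range s, u.choose i •
    (Lam F t k ^ (s - 1 - i) * liftP F t k R ^ (u - i) * Om F t k R G ^ i * liftP F t k G ^ i)

lemma term_coeff_degLE (hGm : G.Monic) {e : ℕ} (a b c d : ℕ) (hab : a + c ≤ e) :
    ∀ i, (Lam F t k ^ a * liftP F t k R ^ b * Om F t k R G ^ c * liftP F t k G ^ d).coeff i
      ∈ degLE F (Fin t ⊕ Fin k) e := by
  intro i
  have h1 : ∀ i, ((Lam F t k) ^ a).coeff i ∈ degLE F (Fin t ⊕ Fin k) (a * 1) :=
    coeff_pow_mem_degLE Lam_coeff_degLE a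
  have h2 : ∀ i, ((liftP F t k R) ^ b).coeff i ∈ degLE F (Fin t ⊕ Fin k) (b * 0) :=
    coeff_pow_mem_degLE (liftP_coeff_degLE R) b
  have h3 : ∀ i, ((Om F t k R G) ^ c).coeff i ∈ degLE F (Fin t ⊕ Fin k) (c * 1) :=
    coeff_pow_mem_degLE (Om_coeff_degLE hGm) c
  have h4 : ∀ i, ((liftP F t k G) ^ d).coeff i ∈ degLE F (Fin t ⊕ Fin k) (d * 0) :=
    coeff_pow_mem_degLE (liftP_coeff_degLE G) d
  have := coeff_mul_mem_degLE (coeff_mul_mem_degLE (coeff_mul_mem_degLE h1 h2) h3) h4 i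
  refine degLE_mono ?_ this
  omega

lemma Ssum_coeff_degLE (hGm : G.Monic) (s u : ℕ) :
    ∀ i, (Ssum F t k R G s u).coeff i ∈ degLE F (Fin t ⊕ Fin k) s := by
  intro i
  rw [Ssum, Polynomial.finset_sum_coeff]
  refine Submodule.sum_mem _ fun j hj => ?_
  rw [Polynomial.coeff_smul]
  refine nsmul_mem ?_ _
  have hj' : j < s := Finset.mem_range.mp hj
  exact term_coeff_degLE hGm (s - j) (u - j) j j (by omega) i

lemma Tsum_coeff_degLE (hGm : G.Monic) (s u : ℕ) :
    ∀ i, (Tsum F t k R G s u).coeff i ∈ degLE F (Fin t ⊕ Fin k) (s - 1) := by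
  intro i
  rw [Tsum, Polynomial.finset_sum_coeff]
  refine Submodule.sum_mem _ fun j hj => ?_
  rw [Polynomial.coeff_smul]
  refine nsmul_mem ?_ _
  have hj' : j < s := Finset.mem_range.mp hj
  exact term_coeff_degLE hGm (s - 1 - j) (u - j) j j (by omega) i

lemma chi_of_ge {s u : ℕ} (h : ¬ u < s) :
    chi F t k R G s u = Ssum F t k R G s u %ₘ liftP F t k G ^ s := by
  rw [chi, if_neg h, Ssum]

lemma Mp_eq_modByMonic (hGm : G.Monic) :
    Lam F t k * liftP F t k R + Om F t k R G * liftP F t k G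
      = (Lam F t k * liftP F t k R) %ₘ liftP F t k G := by
  have h := Polynomial.modByMonic_add_div (Lam F t k * liftP F t k R)
    (G.map MvPolynomial.C)
  rw [Om]
  have : liftP F t k G = G.map MvPolynomial.C := rfl
  rw [this] at *
  linear_combination -h

lemma Lam_mul_Tsum {s : ℕ} (hs : 1 ≤ s) (u : ℕ) :
    Lam F t k * Tsum F t k R G s u = Ssum F t k R G s u := by
  rw [Tsum, Ssum, Finset.mul_sum]
  refine Finset.sum_congr rfl fun i hi => ?_
  have hi' : i < s := Finset.mem_range.mp hi
  rw [mul_smul_comm]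
  refine congrArg (u.choose i • ·) ?_
  have h : s - i = (s - 1 - i) + 1 := by omega
  rw [h, pow_succ]
  ring

lemma Ssum_eq_of_lt {s u : ℕ} (hu : u < s) :
    Ssum F t k R G s u = Lam F t k ^ (s - u)
      * (Lam F t k * liftP F t k R + Om F t k R G * liftP F t k G) ^ u := by
  rw [Ssum, add_comm (Lam F t k * liftP F t k R), add_pow, Finset.mul_sum]
  rw [← Finset.sum_subset (Finset.range_subset_range.mpr (by omega : u + 1 ≤ s))
      (fun x _ hx => by
        rw [Nat.choose_eq_zero_of_lt (by simpa [Nat.lt_succ_iff] using hx), zero_smul])]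
  refine Finset.sum_congr rfl fun i hi => ?_
  have hi' : i ≤ u := by simpa [Nat.lt_succ_iff] using hi
  rw [nsmul_eq_mul]
  have h : Lam F t k ^ (s - i) = Lam F t k ^ (s - u) * Lam F t k ^ (u - i) := by
    rw [← pow_add]
    congr 1
    omega
  rw [h, mul_pow, mul_pow]
  ring

lemma recur (s' u : ℕ) :
    (Lam F t k * liftP F t k R + Om F t k R G * liftP F t k G) * Tsum F t k R G (s'+1) u
    = Ssum F t k R G (s'+1) (u+1)
      + u.choose s' • (liftP F t k R ^ (u - s')
          * Om F t k R G ^ (s'+1) * liftP F t k G ^ (s'+1)) := by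
  set L := Lam F t k with hL
  set Rp := liftP F t k R with hRp
  set Gp := liftP F t k G with hGp
  set Omp := Om F t k R G with hOmp
  set f : ℕ → Polynomial (MvPolynomial (Fin t ⊕ Fin k) F) :=
    fun j => L ^ (s'+1-j) * Rp ^ (u+1-j) * Omp ^ j * Gp ^ j with hf
  have hstep1 : (L * Rp + Omp * Gp) * Tsum F t k R G (s'+1) u
      = ∑ i ∈ Finset.range (s'+1), (u.choose i • f i + u.choose i • f (i+1)) := by
    rw [Tsum, Finset.mul_sum]
    refine Finset.sum_congr rfl fun i hi => ?_
    have hi' : i ≤ s' := by simpa [Nat.lt_succ_iff] using hi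
    have e1 : s' + 1 - 1 - i = s' - i := by omega
    rw [e1]
    by_cases hiu : i ≤ u
    · rw [mul_smul_comm, ← smul_add]
      congr 1
      rw [add_mul]
      refine congrArg₂ (· + ·) ?_ ?_
      · rw [hf]
        have e4 : s' + 1 - i = (s' - i) + 1 := by omega
        have e5 : u + 1 - i = (u - i) + 1 := by omega
        simp only [e4, e5, pow_succ]
        ring
      · rw [hf]
        have e2 : s' + 1 - (i+1) = s' - i := by omega
        have e3 : u + 1 - (i+1) = u - i := by omega
        simp only [e2, e3, pow_succ]
        ring
    · rw [Nat.choose_eq_zero_of_lt (by omega)]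
      simp
  have hbnd : u.choose s' • f (s'+1)
      = u.choose s' • (Rp ^ (u - s') * Omp ^ (s'+1) * Gp ^ (s'+1)) := by
    congr 1
    rw [hf]
    simp only [Nat.sub_self, pow_zero, one_mul]
    have e : u + 1 - (s'+1) = u - s' := by omega
    rw [e]
  have hSsum : Ssum F t k R G (s'+1) (u+1) = ∑ j ∈ Finset.range (s'+1), (u+1).choose j • f j := by
    simp only [Ssum, hf, hL, hRp, hOmp, hGp]
  rw [hstep1, hSsum, ← hbnd]
  rw [Finset.sum_add_distrib]
  rw [Finset.sum_range_succ (fun i => u.choose i • f (i+1)) s']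
  rw [Finset.sum_range_succ' (fun j => (u+1).choose j • f j) s']
  rw [Finset.sum_range_succ' (fun j => u.choose j • f j) s']
  simp only [Nat.choose_succ_succ, add_smul, Finset.sum_add_distrib, Nat.choose_zero_right]
  abel

lemma liftP_monic (hGm : G.Monic) : (liftP F t k G).Monic := hGm.map _

lemma liftP_natDegree (hGm : G.Monic) : (liftP F t k G).natDegree = G.natDegree :=
  hGm.natDegree_map _

lemma Mp_natDegree_lt (hGm : G.Monic) (hG1 : 1 ≤ G.natDegree) :
    (Lam F t k * liftP F t k R + Om F t k R G * liftP F t k G).natDegree < G.natDegree := by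
  rw [Mp_eq_modByMonic hGm]
  set Mp := (Lam F t k * liftP F t k R) %ₘ liftP F t k G with hMp
  rcases eq_or_ne Mp 0 with h | h
  · rw [h]
    simpa using (show 0 < G.natDegree from hG1)
  · rw [Polynomial.natDegree_lt_iff_degree_lt h]
    have := Polynomial.degree_modByMonic_lt (Lam F t k * liftP F t k R) (liftP_monic hGm)
    rw [← hMp] at this
    refine lt_of_lt_of_le this ?_
    rw [Polynomial.degree_eq_natDegree (liftP_monic hGm).ne_zero, liftP_natDegree hGm]

lemma chi_eq_mod (hGm : G.Monic) (htG : t < G.natDegree) {s : ℕ} (hs : 1 ≤ s) (u : ℕ) :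
    chi F t k R G s u = Ssum F t k R G s u %ₘ liftP F t k G ^ s := by
  by_cases hu : u < s
  · rw [chi, if_pos hu, ← Ssum_eq_of_lt hu, eq_comm]
    rw [Polynomial.modByMonic_eq_self_iff ((liftP_monic hGm).pow s)]
    set nG := G.natDegree with hnG
    have hG1 : 1 ≤ nG := by omega
    have hdeg : (Ssum F t k R G s u).natDegree < s * nG := by
      rw [Ssum_eq_of_lt hu]
      have h1 : (Lam F t k ^ (s-u)).natDegree ≤ (s-u) * t :=
        le_trans (Polynomial.natDegree_pow_le)
          (Nat.mul_le_mul_left _ natDegree_Lam_le)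
      have hMp : (Lam F t k * liftP F t k R + Om F t k R G * liftP F t k G).natDegree
          ≤ nG - 1 := by
        have := Mp_natDegree_lt (t := t) (k := k) (R := R) hGm hG1
        omega
      have h2 : ((Lam F t k * liftP F t k R + Om F t k R G * liftP F t k G) ^ u).natDegree
          ≤ u * (nG - 1) :=
        le_trans (Polynomial.natDegree_pow_le) (Nat.mul_le_mul_left _ hMp)
      refine lt_of_le_of_lt (le_trans (Polynomial.natDegree_mul_le) (add_le_add h1 h2)) ?_
      have e1 : (s-u)*t ≤ (s-u)*(nG-1) := Nat.mul_le_mul_left _ (by omega)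
      have e2 : (s-u)*(nG-1) + u*(nG-1) = s*(nG-1) := by
        rw [← add_mul]
        congr 1
        omega
      have e3 : s*(nG-1) < s*nG := Nat.mul_lt_mul_of_pos_left (by omega) (by omega)
      omega
    have hdeg2 : (liftP F t k G ^ s).natDegree = s * nG := by
      rw [(liftP_monic hGm).natDegree_pow, liftP_natDegree hGm]
    calc (Ssum F t k R G s u).degree ≤ ((Ssum F t k R G s u).natDegree : WithBot ℕ) :=
          Polynomial.degree_le_natDegree
      _ < ((liftP F t k G ^ s).natDegree : WithBot ℕ) := by
          rw [hdeg2]; exact_mod_cast hdeg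
      _ = (liftP F t k G ^ s).degree :=
          (Polynomial.degree_eq_natDegree ((liftP_monic hGm).pow s).ne_zero).symm
  · exact chi_of_ge hu

lemma chi_rec (hGm : G.Monic) (htG : t < G.natDegree) {s : ℕ} (hs : 1 ≤ s) (u : ℕ) :
    chi F t k R G s (u+1)
      = (Pp F t k * chi F t k R G s u - Ep F t k R G * Tsum F t k R G s u)
          %ₘ liftP F t k G ^ s := by
  obtain ⟨s', rfl⟩ : ∃ s', s = s' + 1 := ⟨s - 1, by omega⟩
  have hGsm : (liftP F t k G ^ (s'+1)).Monic := (liftP_monic hGm).pow _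
  -- abbreviations
  set L := Lam F t k
  set Rp := liftP F t k R
  set Gp := liftP F t k G
  set Omp := Om F t k R G
  have hMpE : L * Rp + Omp * Gp = L * Pp F t k - Ep F t k R G := by
    rw [Ep, Mp_eq_modByMonic hGm]
    ring
  have hdiv := Polynomial.modByMonic_add_div (Ssum F t k R G (s'+1) u) (Gp ^ (s'+1))
  -- key algebraic decomposition
  have hkey : Ssum F t k R G (s'+1) (u+1)
      = (Pp F t k * chi F t k R G (s'+1) u - Ep F t k R G * Tsum F t k R G (s'+1) u)
        + (Pp F t k * (Ssum F t k R G (s'+1) u /ₘ Gp ^ (s'+1))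
            - (u.choose s' : Polynomial (MvPolynomial (Fin t ⊕ Fin k) F))
              * (Rp ^ (u - s') * Omp ^ (s'+1))) * Gp ^ (s'+1) := by
    have h1 := recur (F := F) (t := t) (k := k) (R := R) (G := G) s' u
    rw [hMpE, nsmul_eq_mul] at h1
    have h2 : L * Tsum F t k R G (s'+1) u = Ssum F t k R G (s'+1) u :=
      Lam_mul_Tsum (by omega) u
    rw [← chi_eq_mod hGm htG (by omega) u] at hdiv
    linear_combination (-1 : Polynomial (MvPolynomial (Fin t ⊕ Fin k) F)) * h1
      + Pp F t k * h2 - Pp F t k * hdiv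
  rw [chi_eq_mod hGm htG (by omega) (u+1), hkey, Polynomial.add_modByMonic,
    (Polynomial.modByMonic_eq_zero_iff_dvd hGsm).mpr (dvd_mul_left _ _), add_zero]

lemma chi_coeff_degLE (hGm : G.Monic) (htG : t < G.natDegree) {s : ℕ} (hs : 1 ≤ s) (u : ℕ) :
    ∀ i, (chi F t k R G s u).coeff i ∈ degLE F (Fin t ⊕ Fin k) s := by
  intro i
  rw [chi_eq_mod hGm htG hs u]
  have hmap : liftP F t k G ^ s = (G ^ s).map MvPolynomial.C := by
    rw [liftP, Polynomial.map_pow]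
  rw [hmap]
  exact coeff_modByMonic_mem (hGm.pow s) (N := 0) (Nat.zero_le _)
    (fun j _ => Ssum_coeff_degLE hGm s u j) i (Nat.zero_le _)

lemma main_induction (hGm : G.Monic) (htG : t + 2 ≤ G.natDegree) (ht : 1 ≤ t) (hk : 2 ≤ k)
    {s : ℕ} (hs : 1 ≤ s) :
    ∀ u, s * t + u * (k-1) ≤ s * G.natDegree - 1 →
      ∀ i, t * s + u * (k-1) < i → (chi F t k R G s u).coeff i ∈ ID F t k R G (s+1) := by
  set n := G.natDegree with hn
  have hts : t * s = s * t := Nat.mul_comm t s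
  have hst1 : 1 ≤ s * t := Nat.one_le_iff_ne_zero.mpr (Nat.mul_ne_zero (by omega) (by omega))
  intro u
  induction u with
  | zero =>
    intro _ i hi
    rw [chi, if_pos (by omega : 0 < s), pow_zero, mul_one, Nat.sub_zero]
    rw [Polynomial.coeff_eq_zero_of_natDegree_lt ?_]
    · exact Submodule.zero_mem _
    · have hbd : (Lam F t k ^ s).natDegree ≤ s * t :=
        le_trans Polynomial.natDegree_pow_le (Nat.mul_le_mul_left _ natDegree_Lam_le)
      omega
  | succ u IH =>
    intro hcond i hi
    have hks : (u+1)*(k-1) = u*(k-1) + (k-1) := Nat.succ_mul u (k-1)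
    have hcond' : s*t + u*(k-1) ≤ s*n - 1 := by omega
    rw [chi_rec hGm (by omega) hs u]
    have hmap : liftP F t k G ^ s = (G ^ s).map MvPolynomial.C := by
      rw [liftP, Polynomial.map_pow]
    rw [hmap]
    have hdegGs : (G ^ s).natDegree = s * n := hGm.natDegree_pow s
    have hsn1 : 1 ≤ s * n := by omega
    refine coeff_modByMonic_mem (hGm.pow s) (N := t*s + (u+1)*(k-1) + 1)
      (by omega) (fun j hj => ?_) i (by omega)
    rw [Polynomial.coeff_sub]
    refine Submodule.sub_mem _ ?_ ?_
    · rw [Polynomial.coeff_mul]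
      refine Submodule.sum_mem _ fun p hp => ?_
      have hpj : p.1 + p.2 = j := Finset.HasAntidiagonal.mem_antidiagonal.mp hp
      by_cases hy : t*s + u*(k-1) < p.2
      · refine mul_mem_ID (IH hcond' p.2 hy)
          (mem_degLE.mp (chi_coeff_degLE hGm (by omega) hs u p.2))
          (mem_degLE.mp (Pp_coeff_degLE p.1)) (by omega)
      · have hx : k ≤ p.1 := by omega
        rw [Pp_coeff_eq_zero hx, zero_mul]
        exact Submodule.zero_mem _
    · rw [Polynomial.coeff_mul]
      refine Submodule.sum_mem _ fun p _ => ?_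
      rw [mul_comm]
      exact mul_mem_ID (ID_gen_mem p.1) (mem_degLE.mp (Ep_coeff_degLE hGm p.1))
        (mem_degLE.mp (Tsum_coeff_degLE hGm s u p.2)) (by omega)

end Stmt13Aux

/-- Lemma 4, claim (19): for `s ≥ 1` and `0 ≤ u < pow_s`
(the condition `u < pow_s`, where `pow_s = max{u : s·t + u·(k−1) ≤ s·n − 1}`, being
expressed equivalently as `s·t + (u+1)·(k−1) ≤ s·n − 1`), for every degree
`i > t·s + (u+1)·(k−1)` the coefficient of `X^i` in `χ(s,u+1)` lies in `I_{s+1}`. -/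
theorem stmt13 (F : Type*) [Field F] (n t k : ℕ) (hn : 0 < n) (ht : 1 ≤ t) (hk : 2 ≤ k)
    (htk : t + k - 1 ≤ n - 1)
    (a b : Fin n → F) (ha : Function.Injective a)
    (G : Polynomial F) (hG : G = ∏ ℓ : Fin n, (X - C (a ℓ)))
    (R : Polynomial F) (hRdeg : R.degree < n) (hR : ∀ ℓ, R.eval (a ℓ) = b ℓ) :
    ∀ s u : ℕ, 1 ≤ s → s * t + (u + 1) * (k - 1) ≤ s * n - 1 →
      ∀ i : ℕ, t * s + (u + 1) * (k - 1) < i →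
        (chi F t k R G s (u + 1)).coeff i ∈ ID F t k R G (s + 1) := by
  intro s u hs hcond i hi
  have hGm : G.Monic := by
    rw [hG]
    exact monic_prod_of_monic _ _ fun ℓ _ => monic_X_sub_C _
  have hGn : G.natDegree = n := by
    rw [hG, Polynomial.natDegree_prod_of_monic _ _ fun ℓ _ => monic_X_sub_C _]
    simp
  have htG : t + 2 ≤ G.natDegree := by
    rw [hGn]
    omega
  rw [← hGn] at hcond
  exact Stmt13Aux.main_induction hGm htG ht hk hs (u+1) hcond i hi
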